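/- (Generalised moment generating function bound, Appendix C.) For every integer J ≥ 1 and every λ > 0, (1/n) log 𝔼[exp(λ S_n)] ≤ (1/2) λ² v̄ + λ² K (f_2(λ c_*) − 1/2) − Σ_{j=0}^{J−1} (K_{j+1}/(j+4)!) λ^{j+4} c_*^{j+2} − K_{J+1} λ^{J+4} c_*^{J+2} f_{J+4}(λ c_*), where K_j = (1/n) Σ_{i=1}^n σ_i² (c_i/c_*)(1 − c_i^j/c_*^j) for integers j ≥ 1. -/

import Mathlib

open MeasureTheory ProbabilityTheory Real Finset

noncomputable def fSeries (k : ℕ) (u : ℝ) : ℝ := ∑' j : ℕ, u ^ j / (Nat.factorial (j + k) : ℝ)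

lemma fSummable (k : ℕ) (u : ℝ) : Summable (fun j : ℕ => u ^ j / (Nat.factorial (j + k) : ℝ)) := by
  apply Summable.of_norm
  refine Summable.of_nonneg_of_le (fun j => norm_nonneg _) (fun j => ?_)
    (Real.summable_pow_div_factorial |u|)
  rw [norm_div, norm_pow, Real.norm_eq_abs]
  have h1 : (0:ℝ) < Nat.factorial j := by positivity
  have h2 : (Nat.factorial j : ℝ) ≤ Nat.factorial (j + k) := by
    exact_mod_cast Nat.factorial_le (Nat.le_add_right j k)
  rw [Real.norm_natCast]
  exact div_le_div_of_nonneg_left (by positivity) h1 h2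

lemma real_exp_eq_tsum (u : ℝ) : Real.exp u = ∑' n : ℕ, u ^ n / (Nat.factorial n : ℝ) := by
  rw [Real.exp_eq_exp_ℝ, NormedSpace.exp_eq_tsum_div]

example : True := trivial

lemma fSeries_nonneg (k : ℕ) {u : ℝ} (hu : 0 ≤ u) : 0 ≤ fSeries k u :=
  tsum_nonneg (fun j => by positivity)

lemma fSeries_ge_first (k : ℕ) {u : ℝ} (hu : 0 ≤ u) :
    (1 : ℝ) / (Nat.factorial k : ℝ) ≤ fSeries k u := by
  have := Summable.sum_add_tsum_nat_add (f := fun j : ℕ => u ^ j / (Nat.factorial (j + k) : ℝ)) 1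
    (fSummable k u)
  rw [fSeries, ← this]
  simp only [Finset.range_one, Finset.sum_singleton, pow_zero, Nat.zero_add]
  have : 0 ≤ ∑' (i : ℕ), u ^ (i + 1) / (Nat.factorial (i + 1 + k) : ℝ) :=
    tsum_nonneg fun j => by positivity
  linarith

lemma fSeries_mono (k : ℕ) {w u : ℝ} (hw : 0 ≤ w) (hwu : w ≤ u) :
    fSeries k w ≤ fSeries k u := by
  refine Summable.tsum_le_tsum (fun j => ?_) (fSummable k w) (fSummable k u)
  gcongr

lemma sq_mul_fSeries_two (u : ℝ) : u ^ 2 * fSeries 2 u = Real.exp u - 1 - u := by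
  rw [real_exp_eq_tsum u]
  have h := Summable.sum_add_tsum_nat_add (f := fun n : ℕ => u ^ n / (Nat.factorial n : ℝ)) 2
    (by simpa using Real.summable_pow_div_factorial u)
  rw [← h]
  simp only [Finset.sum_range_succ, Finset.range_one, Finset.sum_singleton, pow_zero, pow_one,
    Nat.factorial_zero, Nat.factorial_one, Nat.cast_one, div_one]
  rw [fSeries, ← tsum_mul_left]
  have : ∀ j : ℕ, u ^ 2 * (u ^ j / (Nat.factorial (j + 2) : ℝ))
      = u ^ (j + 2) / (Nat.factorial (j + 2) : ℝ) := by
    intro j; rw [pow_add]; ring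
  rw [tsum_congr this]
  ring

lemma exp_le_quadratic_of_nonpos {t : ℝ} (ht : t ≤ 0) : Real.exp t ≤ 1 + t + t ^ 2 / 2 := by
  rcases eq_or_lt_of_le ht with rfl | ht'
  · simp
  have hanti : StrictAntiOn (fun x : ℝ => 1 + x + x ^ 2 / 2 - Real.exp x) (Set.Iic 0) := by
    apply strictAntiOn_of_deriv_neg (convex_Iic 0)
    · fun_prop
    · intro x hx
      rw [interior_Iic] at hx
      have hd : HasDerivAt (fun x : ℝ => 1 + x + x ^ 2 / 2 - Real.exp x)
          (1 + x - Real.exp x) x := by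
        have := ((hasDerivAt_id x).const_add 1).add
          (((hasDerivAt_pow 2 x)).div_const 2) |>.sub (Real.hasDerivAt_exp x)
        exact this.congr_deriv (by norm_num)
      rw [hd.deriv]
      have := Real.add_one_lt_exp (x := x) (by exact ne_of_lt hx)
      linarith
  have := hanti (Set.mem_Iic.2 ht) (Set.mem_Iic.2 le_rfl) ht'
  simp only [Real.exp_zero] at this
  linarith

lemma exp_le_key {t v : ℝ} (htv : t ≤ v) (hv : 0 ≤ v) :
    Real.exp t ≤ 1 + t + t ^ 2 * fSeries 2 v := by
  rcases le_or_gt t 0 with ht | ht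
  · have h1 := exp_le_quadratic_of_nonpos ht
    have h2 : (1:ℝ)/2 ≤ fSeries 2 v := by simpa using fSeries_ge_first 2 hv
    nlinarith [sq_nonneg t]
  · have h1 : Real.exp t = 1 + t + t ^ 2 * fSeries 2 t := by
      have := sq_mul_fSeries_two t; linarith
    rw [h1]
    have := fSeries_mono 2 ht.le htv
    nlinarith [sq_nonneg t]

noncomputable def tailT (a u : ℝ) (m : ℕ) : ℝ :=
  (1 - a ^ (m + 1)) * u ^ (m + 2) / (Nat.factorial (m + 4) : ℝ)

lemma tailT_summable {a : ℝ} (ha0 : 0 ≤ a) (ha1 : a ≤ 1) (u : ℝ) :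
    Summable (tailT a u) := by
  apply Summable.of_norm
  refine Summable.of_nonneg_of_le (fun m => norm_nonneg _) (fun m => ?_)
    ((Real.summable_pow_div_factorial |u|).mul_left (|u| ^ 2))
  have h0 : 0 ≤ 1 - a ^ (m + 1) := by
    have : a ^ (m + 1) ≤ 1 := pow_le_one₀ ha0 ha1
    linarith
  have h1 : 1 - a ^ (m + 1) ≤ 1 := by
    have := pow_nonneg ha0 (m + 1); linarith
  rw [tailT, norm_div, norm_mul, norm_pow, Real.norm_eq_abs, Real.norm_eq_abs, abs_of_nonneg h0,
    Real.norm_natCast]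
  have hf1 : (0:ℝ) < Nat.factorial m := by positivity
  have hf2 : (Nat.factorial m : ℝ) ≤ Nat.factorial (m + 4) := by
    exact_mod_cast Nat.factorial_le (Nat.le_add_right m 4)
  calc (1 - a ^ (m + 1)) * |u| ^ (m + 2) / (Nat.factorial (m + 4) : ℝ)
      ≤ 1 * |u| ^ (m + 2) / (Nat.factorial m : ℝ) := by gcongr
    _ = |u| ^ 2 * (|u| ^ m / (Nat.factorial m : ℝ)) := by rw [pow_add]; ring

lemma fSeries_two_identity {a : ℝ} (ha0 : 0 ≤ a) (ha1 : a ≤ 1) (u : ℝ) :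
    fSeries 2 (a * u) = 1 / 2 + a * (fSeries 2 u - 1 / 2) - a * ∑' m, tailT a u m := by
  have hs1 : Summable (fun j : ℕ => (a * u) ^ j / (Nat.factorial (j + 2) : ℝ)) := fSummable 2 _
  have hs2 : Summable (fun j : ℕ => a * (u ^ j / (Nat.factorial (j + 2) : ℝ))) :=
    (fSummable 2 u).mul_left a
  have key : fSeries 2 (a * u) - a * fSeries 2 u
      = ∑' j : ℕ, ((a * u) ^ j / (Nat.factorial (j + 2) : ℝ)
          - a * (u ^ j / (Nat.factorial (j + 2) : ℝ))) := by
    rw [fSeries, fSeries, ← tsum_mul_left, ← Summable.tsum_sub hs1 hs2]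
  have hsd : Summable (fun j : ℕ => (a * u) ^ j / (Nat.factorial (j + 2) : ℝ)
      - a * (u ^ j / (Nat.factorial (j + 2) : ℝ))) := hs1.sub hs2
  have split : (∑ j ∈ Finset.range 2, ((a * u) ^ j / (Nat.factorial (j + 2) : ℝ)
        - a * (u ^ j / (Nat.factorial (j + 2) : ℝ))))
      + ∑' m : ℕ, ((a * u) ^ (m + 2) / (Nat.factorial (m + 2 + 2) : ℝ)
        - a * (u ^ (m + 2) / (Nat.factorial (m + 2 + 2) : ℝ)))
      = ∑' j : ℕ, ((a * u) ^ j / (Nat.factorial (j + 2) : ℝ)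
        - a * (u ^ j / (Nat.factorial (j + 2) : ℝ))) :=
    Summable.sum_add_tsum_nat_add 2 hsd
  have htail : ∑' m : ℕ, ((a * u) ^ (m + 2) / (Nat.factorial (m + 2 + 2) : ℝ)
      - a * (u ^ (m + 2) / (Nat.factorial (m + 2 + 2) : ℝ))) = (-a) * ∑' m, tailT a u m := by
    rw [← tsum_mul_left]
    refine tsum_congr fun m => ?_
    have hfact : m + 2 + 2 = m + 4 := by omega
    rw [hfact, tailT, mul_pow]
    have hf : (0:ℝ) < Nat.factorial (m + 4) := by positivity
    field_simp
    ring
  have hfirst : (∑ j ∈ Finset.range 2, ((a * u) ^ j / (Nat.factorial (j + 2) : ℝ)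
      - a * (u ^ j / (Nat.factorial (j + 2) : ℝ)))) = (1 - a) / 2 := by
    simp [Finset.sum_range_succ, Nat.factorial]
    ring
  rw [← split, hfirst, htail] at key
  linarith

lemma scalar_key {a u : ℝ} (ha0 : 0 ≤ a) (ha1 : a ≤ 1) (hu : 0 ≤ u) (J : ℕ) :
    fSeries 2 (a * u) ≤ 1 / 2 + a * (fSeries 2 u - 1 / 2)
      - (∑ j ∈ Finset.range J,
          a * (1 - a ^ (j + 1)) / (Nat.factorial (j + 4) : ℝ) * u ^ (j + 2))
      - a * (1 - a ^ (J + 1)) * u ^ (J + 2) * fSeries (J + 4) u := by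
  rw [fSeries_two_identity ha0 ha1 u]
  have hsum : Summable (tailT a u) := tailT_summable ha0 ha1 u
  have hsplit := Summable.sum_add_tsum_nat_add (f := tailT a u) J hsum
  have htail_ge : (1 - a ^ (J + 1)) * u ^ (J + 2) * fSeries (J + 4) u
      ≤ ∑' m : ℕ, tailT a u (m + J) := by
    have hrw : (1 - a ^ (J + 1)) * u ^ (J + 2) * fSeries (J + 4) u
        = ∑' m : ℕ, (1 - a ^ (J + 1)) * u ^ (J + 2) * (u ^ m / (Nat.factorial (m + (J + 4)) : ℝ)) := by
      rw [fSeries, ← tsum_mul_left]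
    rw [hrw]
    refine Summable.tsum_le_tsum (fun m => ?_)
      ((fSummable (J + 4) u).mul_left _) ((tailT_summable ha0 ha1 u).comp_injective
        (add_left_injective J))
    · show (1 - a ^ (J + 1)) * u ^ (J + 2) * (u ^ m / (Nat.factorial (m + (J + 4)) : ℝ))
        ≤ tailT a u (m + J)
      rw [tailT]
      have h1 : a ^ (m + J + 1) ≤ a ^ (J + 1) := pow_le_pow_of_le_one ha0 ha1 (by omega)
      have h2 : (0:ℝ) ≤ 1 - a ^ (m + J + 1) := by
        have : a ^ (m + J + 1) ≤ 1 := pow_le_one₀ ha0 ha1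
        linarith
      have hfe : m + (J + 4) = m + J + 4 := by omega
      have hue : u ^ (J + 2) * u ^ m = u ^ (m + J + 2) := by
        rw [← pow_add]; congr 1; omega
      rw [hfe]
      have hf : (0:ℝ) < Nat.factorial (m + J + 4) := by positivity
      calc (1 - a ^ (J + 1)) * u ^ (J + 2) * (u ^ m / (Nat.factorial (m + J + 4) : ℝ))
          = (1 - a ^ (J + 1)) * u ^ (m + J + 2) / (Nat.factorial (m + J + 4) : ℝ) := by
            rw [← hue]; ring
        _ ≤ (1 - a ^ (m + J + 1)) * u ^ (m + J + 2) / (Nat.factorial (m + J + 4) : ℝ) := by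
            gcongr
  have hfin : (∑ j ∈ Finset.range J,
      a * (1 - a ^ (j + 1)) / (Nat.factorial (j + 4) : ℝ) * u ^ (j + 2))
      = a * ∑ j ∈ Finset.range J, tailT a u j := by
    rw [Finset.mul_sum]
    refine Finset.sum_congr rfl fun j _ => ?_
    rw [tailT]; ring
  have hmul : a * ((∑ j ∈ Finset.range J, tailT a u j) + (1 - a ^ (J + 1)) * u ^ (J + 2)
      * fSeries (J + 4) u) ≤ a * ∑' m, tailT a u m := by
    apply mul_le_mul_of_nonneg_left _ ha0
    rw [← hsplit]
    gcongr
  rw [hfin]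
  nlinarith [hmul]

lemma mgf_single {Ω : Type*} [MeasurableSpace Ω] (μ : Measure Ω) [IsProbabilityMeasure μ]
    (Y : Ω → ℝ) (hmeas : Measurable Y) (hmean : ∫ ω, Y ω ∂μ = 0) (hL2 : MemLp Y 2 μ)
    (c : ℝ) (hc : 0 ≤ c) (hb : ∀ᵐ ω ∂μ, Y ω ≤ c) (l : ℝ) (hl : 0 < l) :
    ∫ ω, Real.exp (l * Y ω) ∂μ ≤ 1 + l ^ 2 * variance Y μ * fSeries 2 (l * c) := by
  have hint : Integrable (fun ω => Real.exp (l * Y ω)) μ := by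
    refine Integrable.mono' (integrable_const (Real.exp (l * c)))
      ((hmeas.const_mul l).exp.aestronglyMeasurable) ?_
    filter_upwards [hb] with ω h
    rw [Real.norm_eq_abs, abs_of_pos (Real.exp_pos _)]
    exact Real.exp_le_exp.2 (by nlinarith)
  have hY1 : Integrable Y μ := hL2.integrable (by norm_num)
  have hY2 : Integrable (fun ω => (Y ω) ^ 2) μ := by
    simpa [pow_two] using hL2.integrable_sq
  have hrhs : Integrable
      (fun ω => 1 + l * Y ω + (l * Y ω) ^ 2 * fSeries 2 (l * c)) μ := by
    apply Integrable.add
    · exact (integrable_const 1).add (hY1.const_mul l)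
    · have : (fun ω => (l * Y ω) ^ 2 * fSeries 2 (l * c))
          = fun ω => (l ^ 2 * fSeries 2 (l * c)) * (Y ω) ^ 2 := by
        funext ω; ring
      rw [this]
      exact hY2.const_mul _
  have hmono : ∫ ω, Real.exp (l * Y ω) ∂μ
      ≤ ∫ ω, (1 + l * Y ω + (l * Y ω) ^ 2 * fSeries 2 (l * c)) ∂μ := by
    refine integral_mono_ae hint hrhs ?_
    filter_upwards [hb] with ω h
    exact exp_le_key (by nlinarith) (by positivity)
  refine hmono.trans_eq ?_
  have h1 : (fun ω => 1 + l * Y ω + (l * Y ω) ^ 2 * fSeries 2 (l * c))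
      = fun ω => (1 + l * Y ω) + (l ^ 2 * fSeries 2 (l * c)) * (Y ω) ^ 2 := by
    funext ω; ring
  have hfA : Integrable (fun ω => 1 + l * Y ω) μ := by
    simpa using (integrable_const (1:ℝ)).add (hY1.const_mul l)
  have hfB : Integrable (fun ω => l ^ 2 * fSeries 2 (l * c) * Y ω ^ 2) μ := hY2.const_mul _
  rw [h1, integral_add hfA hfB,
    integral_add (integrable_const 1) (hY1.const_mul l), integral_const,
    integral_const_mul, integral_const_mul, hmean]
  have hvar2 : variance Y μ = ∫ ω, (Y ω) ^ 2 ∂μ := by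
    rw [variance_eq_sub hL2]
    simp only [Pi.pow_apply, hmean]
    ring
  simp [hvar2]
  ring

/-- **Generalised moment generating function bound** (Appendix C). With the setup of
Lemma 1 and `K_j = (1/n) ∑ i, σ i ² (c i/c✶)(1 − (c i/c✶)^j)`, for every integer `J ≥ 1`
and every `λ > 0`:
`(1/n) log 𝔼[exp (λ S_n)] ≤ (1/2) λ² v̄ + λ² K (f₂(λ c✶) − 1/2)
  − ∑_{j=0}^{J−1} (K_{j+1}/(j+4)!) λ^{j+4} c✶^{j+2} − K_{J+1} λ^{J+4} c✶^{J+2} f_{J+4}(λ c✶)`. -/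
theorem generalised_mgf_bound
    {Ω : Type*} [MeasurableSpace Ω] (μ : Measure Ω) [IsProbabilityMeasure μ]
    (n : ℕ) (hn : 0 < n) (X : Fin n → Ω → ℝ) (σ c : Fin n → ℝ) (cstar : ℝ)
    (hmeas : ∀ i, Measurable (X i))
    (hindep : iIndepFun X μ)
    (hmean : ∀ i, ∫ ω, X i ω ∂μ = 0)
    (hL2 : ∀ i, MemLp (X i) 2 μ)
    (hvar : ∀ i, variance (X i) μ = σ i ^ 2)
    (hcnonneg : ∀ i, 0 ≤ c i)
    (hbdd : ∀ i, ∀ᵐ ω ∂μ, X i ω ≤ c i)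
    (hcmax : ∀ i, c i ≤ cstar) (hcattained : ∃ i, c i = cstar) (hcpos : 0 < cstar)
    (v K : ℝ) (Kj : ℕ → ℝ)
    (hv : v = (1 / (n : ℝ)) * ∑ i, σ i ^ 2)
    (hK : K = (1 / (n : ℝ)) * ∑ i, σ i ^ 2 * (c i / cstar))
    (hKj : ∀ j : ℕ, 1 ≤ j →
      Kj j = (1 / (n : ℝ)) * ∑ i, σ i ^ 2 * (c i / cstar) * (1 - (c i / cstar) ^ j))
    (J : ℕ) (hJ : 1 ≤ J) (l : ℝ) (hl : 0 < l) :
    Real.log (∫ ω, Real.exp (l * ∑ i, X i ω) ∂μ) / (n : ℝ) ≤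
      (1 / 2) * l ^ 2 * v + l ^ 2 * K * (fSeries 2 (l * cstar) - 1 / 2) -
        (∑ j ∈ Finset.range J,
          (Kj (j + 1) / (Nat.factorial (j + 4) : ℝ)) * l ^ (j + 4) * cstar ^ (j + 2)) -
        Kj (J + 1) * l ^ (J + 4) * cstar ^ (J + 2) * fSeries (J + 4) (l * cstar) := by
  have hcne : cstar ≠ 0 := ne_of_gt hcpos
  set u : ℝ := l * cstar with hu_def
  have hu0 : 0 ≤ u := by positivity
  have ha0 : ∀ i, 0 ≤ c i / cstar := fun i => div_nonneg (hcnonneg i) hcpos.le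
  have ha1 : ∀ i, c i / cstar ≤ 1 := fun i => (div_le_one hcpos).2 (hcmax i)
  have hac : ∀ i, (c i / cstar) * u = l * c i := by
    intro i; rw [hu_def]; field_simp
  -- integrability of each exponential
  have hint : ∀ i, Integrable (fun ω => Real.exp (l * X i ω)) μ := by
    intro i
    refine Integrable.mono' (integrable_const (Real.exp (l * c i)))
      (((hmeas i).const_mul l).exp.aestronglyMeasurable) ?_
    filter_upwards [hbdd i] with ω h
    rw [Real.norm_eq_abs, abs_of_pos (Real.exp_pos _)]
    exact Real.exp_le_exp.2 (mul_le_mul_of_nonneg_left h hl.le)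
  -- product formula
  have hprod : ∫ ω, Real.exp (l * ∑ i, X i ω) ∂μ = ∏ i, mgf (X i) μ l := by
    rw [← hindep.mgf_sum hmeas Finset.univ]
    unfold mgf
    congr 1
    funext ω
    simp [Finset.sum_apply]
  have hlog : Real.log (∫ ω, Real.exp (l * ∑ i, X i ω) ∂μ)
      = ∑ i, Real.log (mgf (X i) μ l) := by
    rw [hprod, Real.log_prod]
    exact fun i _ => (mgf_pos (hint i)).ne'
  -- per-variable bound
  have hQ : ∀ i, Real.log (mgf (X i) μ l) ≤ l ^ 2 * σ i ^ 2 * fSeries 2 (l * c i) := by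
    intro i
    have hp : 0 < mgf (X i) μ l := mgf_pos (hint i)
    have h1 : mgf (X i) μ l ≤ 1 + l ^ 2 * σ i ^ 2 * fSeries 2 (l * c i) := by
      have h2 := mgf_single μ (X i) (hmeas i) (hmean i) (hL2 i) (c i) (hcnonneg i)
        (hbdd i) l hl
      rw [hvar i] at h2
      exact h2
    have h3 := Real.log_le_sub_one_of_pos hp
    linarith
  -- scalar bound per variable
  set Q : Fin n → ℝ := fun i => l ^ 2 * (1 / 2 + (c i / cstar) * (fSeries 2 u - 1 / 2)
        - (∑ j ∈ Finset.range J, (c i / cstar) * (1 - (c i / cstar) ^ (j + 1))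
            / (Nat.factorial (j + 4) : ℝ) * u ^ (j + 2))
        - (c i / cstar) * (1 - (c i / cstar) ^ (J + 1)) * u ^ (J + 2) * fSeries (J + 4) u)
    with hQdef
  have hscal : ∀ i, l ^ 2 * σ i ^ 2 * fSeries 2 (l * c i) ≤ σ i ^ 2 * Q i := by
    intro i
    have hs := scalar_key (ha0 i) (ha1 i) hu0 J
    rw [hac i] at hs
    calc l ^ 2 * σ i ^ 2 * fSeries 2 (l * c i)
        = σ i ^ 2 * (l ^ 2 * fSeries 2 (l * c i)) := by ring
      _ ≤ σ i ^ 2 * Q i := by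
          rw [hQdef]
          exact mul_le_mul_of_nonneg_left (mul_le_mul_of_nonneg_left hs (sq_nonneg l))
            (sq_nonneg (σ i))
  have hn' : (0:ℝ) < (n : ℝ) := by exact_mod_cast hn
  -- rewrite the RHS of the goal as an average
  have hE1 : (1 / 2) * l ^ 2 * v = (1 / (n:ℝ)) * ∑ i, σ i ^ 2 * (l ^ 2 * (1 / 2)) := by
    rw [hv, Finset.mul_sum, Finset.mul_sum, Finset.mul_sum]
    refine Finset.sum_congr rfl fun i _ => ?_
    ring
  have hE2 : l ^ 2 * K * (fSeries 2 u - 1 / 2)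
      = (1 / (n:ℝ)) * ∑ i, σ i ^ 2 * (l ^ 2 * ((c i / cstar) * (fSeries 2 u - 1 / 2))) := by
    rw [hK]
    simp only [Finset.mul_sum, Finset.sum_mul]
    refine Finset.sum_congr rfl fun i _ => ?_
    ring
  have hE3 : (∑ j ∈ Finset.range J,
        (Kj (j + 1) / (Nat.factorial (j + 4) : ℝ)) * l ^ (j + 4) * cstar ^ (j + 2))
      = (1 / (n:ℝ)) * ∑ i, σ i ^ 2 * (l ^ 2 *
          (∑ j ∈ Finset.range J, (c i / cstar) * (1 - (c i / cstar) ^ (j + 1))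
            / (Nat.factorial (j + 4) : ℝ) * u ^ (j + 2))) := by
    have step : ∀ j ∈ Finset.range J,
        (Kj (j + 1) / (Nat.factorial (j + 4) : ℝ)) * l ^ (j + 4) * cstar ^ (j + 2)
        = ∑ i, (1 / (n:ℝ)) * (σ i ^ 2 * (l ^ 2 * ((c i / cstar) * (1 - (c i / cstar) ^ (j + 1))
            / (Nat.factorial (j + 4) : ℝ) * u ^ (j + 2)))) := by
      intro j _
      rw [hKj (j + 1) (by omega), hu_def]
      simp only [Finset.mul_sum, Finset.sum_mul, Finset.sum_div]
      refine Finset.sum_congr rfl fun i _ => ?_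
      rw [mul_pow]
      ring
    rw [Finset.sum_congr rfl step, Finset.sum_comm]
    simp only [Finset.mul_sum]
  have hE4 : Kj (J + 1) * l ^ (J + 4) * cstar ^ (J + 2) * fSeries (J + 4) u
      = (1 / (n:ℝ)) * ∑ i, σ i ^ 2 * (l ^ 2 *
          ((c i / cstar) * (1 - (c i / cstar) ^ (J + 1)) * u ^ (J + 2) * fSeries (J + 4) u)) := by
    rw [hKj (J + 1) (by omega), hu_def]
    simp only [Finset.mul_sum, Finset.sum_mul]
    refine Finset.sum_congr rfl fun i _ => ?_
    rw [mul_pow]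
    ring
  rw [hlog, hE1, hE2, hE3, hE4]
  have hcomb : (1 / (n:ℝ)) * (∑ i, σ i ^ 2 * (l ^ 2 * (1 / 2)))
      + (1 / (n:ℝ)) * (∑ i, σ i ^ 2 * (l ^ 2 * ((c i / cstar) * (fSeries 2 u - 1 / 2))))
      - (1 / (n:ℝ)) * (∑ i, σ i ^ 2 * (l ^ 2 *
          (∑ j ∈ Finset.range J, (c i / cstar) * (1 - (c i / cstar) ^ (j + 1))
            / (Nat.factorial (j + 4) : ℝ) * u ^ (j + 2))))
      - (1 / (n:ℝ)) * (∑ i, σ i ^ 2 * (l ^ 2 *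
          ((c i / cstar) * (1 - (c i / cstar) ^ (J + 1)) * u ^ (J + 2) * fSeries (J + 4) u)))
      = (1 / (n:ℝ)) * ∑ i, σ i ^ 2 * Q i := by
    rw [← mul_add, ← mul_sub, ← mul_sub]
    congr 1
    rw [← Finset.sum_add_distrib, ← Finset.sum_sub_distrib, ← Finset.sum_sub_distrib]
    refine Finset.sum_congr rfl fun i _ => ?_
    rw [hQdef]
    ring
  rw [hcomb]
  calc (∑ i, Real.log (mgf (X i) μ l)) / (n:ℝ)
      ≤ (∑ i, σ i ^ 2 * Q i) / (n:ℝ) := by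
        gcongr with i hi
        exact (hQ i).trans (hscal i)
    _ = (1 / (n:ℝ)) * ∑ i, σ i ^ 2 * Q i := by ring
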